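/- arXiv:1612.05131 — 3 statements merged into one kernel-verified Lean document; each statement's English description precedes it below -/
import Mathlib

section
/- The arc set produced by any complete run of the arc-eager system is projective: for any two arcs, their spans [min(h,d), max(h,d)] are either disjoint or nested, never properly crossing. -/
/-- A configuration of the arc-eager transition system: a stack `S` of word
indices (top at the head), a buffer `B` of word indices (front at the head),
and a set `A` of arcs `(head, dependent)`. -/
structure Config where
  S : List ℕ
  B : List ℕ
  A : Set (ℕ × ℕ)

/-- The four arc-eager transitions. -/
inductive Step : Config → Config → Prop
  | shift (S : List ℕ) (b : ℕ) (B : List ℕ) (A : Set (ℕ × ℕ)) :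
      Step ⟨S, b :: B, A⟩ ⟨b :: S, B, A⟩
  | rightArc (s : ℕ) (S : List ℕ) (b : ℕ) (B : List ℕ) (A : Set (ℕ × ℕ)) :
      Step ⟨s :: S, b :: B, A⟩ ⟨b :: s :: S, B, insert (s, b) A⟩
  | leftArc (s : ℕ) (S : List ℕ) (b : ℕ) (B : List ℕ) (A : Set (ℕ × ℕ))
      (hroot : s ≠ 0) (hhead : ∀ k, (k, s) ∉ A) :
      Step ⟨s :: S, b :: B, A⟩ ⟨S, b :: B, insert (b, s) A⟩
  | reduce (s : ℕ) (S : List ℕ) (B : List ℕ) (A : Set (ℕ × ℕ))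
      (hhead : ∃ k, (k, s) ∈ A) :
      Step ⟨s :: S, B, A⟩ ⟨S, B, A⟩

/-- Initial configuration for a sentence with words indexed `1, …, n`. -/
def Init (n : ℕ) : Config := ⟨[], (List.range n).map (· + 1), ∅⟩

/-- Pairwise non-crossing property of an arc set. -/
def NoCross (A : Set (ℕ × ℕ)) : Prop :=
  ∀ e₁ ∈ A, ∀ e₂ ∈ A,
    ¬(min e₁.1 e₁.2 < min e₂.1 e₂.2 ∧ min e₂.1 e₂.2 < max e₁.1 e₁.2 ∧
      max e₁.1 e₁.2 < max e₂.1 e₂.2)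

/-- The run invariant: stack strictly decreasing (top at head), buffer strictly
increasing, stack below buffer, no stack/buffer element strictly inside any
arc span, and arcs pairwise non-crossing. -/
def RunInv (S B : List ℕ) (A : Set (ℕ × ℕ)) : Prop :=
  S.Pairwise (· > ·) ∧ B.Pairwise (· < ·) ∧
  (∀ x ∈ S, ∀ y ∈ B, x < y) ∧
  (∀ e ∈ A, ∀ x ∈ S ++ B, ¬(min e.1 e.2 < x ∧ x < max e.1 e.2)) ∧
  NoCross A

lemma noCross_insert {A : Set (ℕ × ℕ)} {s b : ℕ} (hsb : s < b)
    (hNC : NoCross A)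
    (hs : ∀ e ∈ A, ¬(min e.1 e.2 < s ∧ s < max e.1 e.2))
    (hb : ∀ e ∈ A, ¬(min e.1 e.2 < b ∧ b < max e.1 e.2))
    {p : ℕ × ℕ} (hp1 : min p.1 p.2 = s) (hp2 : max p.1 p.2 = b) :
    NoCross (insert p A) := by
  intro e₁ he₁ e₂ he₂
  rcases Set.mem_insert_iff.mp he₁ with h1 | h1 <;>
    rcases Set.mem_insert_iff.mp he₂ with h2 | h2
  · rw [h1, h2, hp1, hp2]; omega
  · rw [h1, hp1, hp2]; have := hb e₂ h2; omega
  · rw [h2, hp1, hp2]; have := hs e₁ h1; have := hb e₁ h1; omega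
  · exact hNC e₁ h1 e₂ h2

lemma inv_init (n : ℕ) : RunInv (Init n).S (Init n).B (Init n).A := by
  refine ⟨by simp [Init], ?_, by simp [Init], by simp [Init], by simp [Init, NoCross]⟩
  simp only [Init, List.pairwise_map]
  exact (List.pairwise_lt_range (n := n)).imp (by omega)

lemma inv_step {c c' : Config} (h : Step c c') (hc : RunInv c.S c.B c.A) :
    RunInv c'.S c'.B c'.A := by
  cases h with
  | shift S b B A =>
    obtain ⟨hS, hB, hSB, hIn, hNC⟩ := hc
    obtain ⟨hb, hB'⟩ := List.pairwise_cons.mp hB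
    refine ⟨List.pairwise_cons.mpr ⟨fun x hx => hSB x hx b (List.mem_cons_self), hS⟩,
      hB', ?_, ?_, hNC⟩
    · intro x hx y hy
      rcases List.mem_cons.mp hx with rfl | hx
      · exact hb y hy
      · exact hSB x hx y (List.mem_cons_of_mem _ hy)
    · intro e he x hx
      apply hIn e he x
      simp only [List.mem_append, List.mem_cons] at hx ⊢
      tauto
  | rightArc s S b B A =>
    obtain ⟨hS, hB, hSB, hIn, hNC⟩ := hc
    obtain ⟨hs, hS'⟩ := List.pairwise_cons.mp hS
    obtain ⟨hb, hB'⟩ := List.pairwise_cons.mp hB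
    have hsb : s < b := hSB s (List.mem_cons_self) b (List.mem_cons_self)
    have hmem : ∀ x, x ∈ (b :: s :: S) ++ B → x ∈ (s :: S) ++ (b :: B) := by
      intro x hx
      simp only [List.mem_append, List.mem_cons] at hx ⊢
      tauto
    refine ⟨?_, hB', ?_, ?_, ?_⟩
    · refine List.pairwise_cons.mpr ⟨?_, hS⟩
      intro x hx
      rcases List.mem_cons.mp hx with rfl | hx
      · exact hsb
      · exact lt_trans (hs x hx) hsb
    · intro x hx y hy
      have : y ∈ b :: B := List.mem_cons_of_mem _ hy
      rcases List.mem_cons.mp hx with rfl | hx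
      · exact hb y hy
      · exact hSB x hx y this
    · intro e he x hx
      rcases Set.mem_insert_iff.mp he with rfl | he
      · simp only [min_eq_left hsb.le, max_eq_right hsb.le]
        simp only [List.mem_append, List.mem_cons] at hx
        rcases hx with (rfl | rfl | hx) | hx
        · omega
        · omega
        · have := hs x hx; omega
        · have := hb x hx; omega
      · exact hIn e he x (hmem x hx)
    · refine noCross_insert hsb hNC ?_ ?_ (by simp [min_eq_left hsb.le])
        (by simp [max_eq_right hsb.le])
      · intro e he; exact hIn e he s (by simp)
      · intro e he; exact hIn e he b (by simp)
  | leftArc s S b B A hroot hhead =>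
    obtain ⟨hS, hB, hSB, hIn, hNC⟩ := hc
    obtain ⟨hs, hS'⟩ := List.pairwise_cons.mp hS
    have hsb : s < b := hSB s (List.mem_cons_self) b (List.mem_cons_self)
    have hmem : ∀ x, x ∈ S ++ (b :: B) → x ∈ (s :: S) ++ (b :: B) := by
      intro x hx
      simp only [List.mem_append, List.mem_cons] at hx ⊢
      tauto
    refine ⟨hS', hB, fun x hx y hy => hSB x (List.mem_cons_of_mem _ hx) y hy, ?_, ?_⟩
    · intro e he x hx
      rcases Set.mem_insert_iff.mp he with rfl | he
      · simp only [min_eq_right hsb.le, max_eq_left hsb.le]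
        simp only [List.mem_append, List.mem_cons] at hx
        rcases hx with hx | rfl | hx
        · have := hs x hx; omega
        · omega
        · have := (List.pairwise_cons.mp hB).1 x hx; omega
      · exact hIn e he x (hmem x hx)
    · refine noCross_insert hsb hNC ?_ ?_ (by simp [min_eq_right hsb.le])
        (by simp [max_eq_left hsb.le])
      · intro e he; exact hIn e he s (by simp)
      · intro e he; exact hIn e he b (by simp)
  | reduce s S B A hhead =>
    obtain ⟨hS, hB, hSB, hIn, hNC⟩ := hc
    refine ⟨(List.pairwise_cons.mp hS).2, hB,
      fun x hx y hy => hSB x (List.mem_cons_of_mem _ hx) y hy, ?_, hNC⟩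
    intro e he x hx
    apply hIn e he x
    simp only [List.mem_append, List.mem_cons] at hx ⊢
    tauto

/-- The arc set produced by any complete run of the arc-eager system is
projective: the spans of any two arcs are disjoint or nested, never properly
crossing. -/
theorem stmt7 (n : ℕ) (c : Config)
    (h : Relation.ReflTransGen Step (Init n) c) (hfin : c.B = []) :
    ∀ e₁ ∈ c.A, ∀ e₂ ∈ c.A,
      ¬(min e₁.1 e₁.2 < min e₂.1 e₂.2 ∧ min e₂.1 e₂.2 < max e₁.1 e₁.2 ∧
        max e₁.1 e₁.2 < max e₂.1 e₂.2) := by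
  have key : ∀ d : Config, Relation.ReflTransGen Step (Init n) d → RunInv d.S d.B d.A := by
    intro d hd
    induction hd with
    | refl => exact inv_init n
    | tail h1 h2 ih => exact inv_step h2 ih
  exact (key c h).2.2.2.2
end

section
/- The required-arc and forbidden-arc sets defined recursively by the arc-eager actions are always disjoint: for every reachable configuration Λ and every applicable action a, RA(Λ, a) ∩ FA(Λ, a) = ∅. -/
/-- Reversal of a set of arcs. -/
def Rev (ra : Set (ℕ × ℕ)) : Set (ℕ × ℕ) := {p | (p.2, p.1) ∈ ra}

/-- `Earcs S ra = ({t→u, u→t : t, u ∈ S, t ≠ u} ∪ Rev ra) \ ra`. -/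
def Earcs (S : List ℕ) (ra : Set (ℕ × ℕ)) : Set (ℕ × ℕ) :=
  ({p | p.1 ∈ S ∧ p.2 ∈ S ∧ p.1 ≠ p.2} ∪ Rev ra) \ ra

structure ArcInv (c : Config) : Prop where
  hB : c.B.Nodup
  hS : c.S.Nodup
  hSB : ∀ x ∈ c.S, x ∉ c.B
  hDep : ∀ p ∈ c.A, p.2 ∉ c.B
  hHead : ∀ p ∈ c.A, ∀ t, t <:+ c.S → p.2 ∈ t → p.1 ∈ t

lemma inv_init_s11 (n : ℕ) : ArcInv (Init n) := by
  constructor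
  · exact (List.nodup_range).map (fun a b h => by omega)
  · exact List.nodup_nil
  · intro x hx; simp [Init] at hx
  · intro p hp; simp [Init] at hp
  · intro p hp; simp [Init] at hp

lemma inv_step_s11 {c c' : Config} (hi : ArcInv c) (hs : Step c c') : ArcInv c' := by
  obtain ⟨hB, hS, hSB, hDep, hHead⟩ := hi
  cases hs with
  | shift S b B A =>
    dsimp only at *
    have hbS : b ∉ S := fun h => hSB b h (List.mem_cons_self)
    refine ⟨hB.of_cons, List.nodup_cons.mpr ⟨hbS, hS⟩, ?_, ?_, ?_⟩
    · dsimp only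
      intro x hx
      rcases List.mem_cons.mp hx with rfl | hx
      · exact (List.nodup_cons.mp hB).1
      · exact fun h => hSB x hx (List.mem_cons_of_mem _ h)
    · exact fun p hp h => hDep p hp (List.mem_cons_of_mem _ h)
    · intro p hp t ht hp2
      rcases List.suffix_cons_iff.mp ht with rfl | ht
      · rcases List.mem_cons.mp hp2 with h | h
        · exact absurd (h ▸ (List.mem_cons_self : b ∈ b :: B)) (hDep p hp)
        · exact List.mem_cons_of_mem _ (hHead p hp S List.suffix_rfl h)
      · exact hHead p hp t ht hp2
  | rightArc s S b B A =>
    dsimp only at *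
    have hbS : b ∉ s :: S := fun h => hSB b h (List.mem_cons_self)
    refine ⟨hB.of_cons, List.nodup_cons.mpr ⟨hbS, hS⟩, ?_, ?_, ?_⟩
    · dsimp only
      intro x hx
      rcases List.mem_cons.mp hx with rfl | hx
      · exact (List.nodup_cons.mp hB).1
      · exact fun h => hSB x hx (List.mem_cons_of_mem _ h)
    · dsimp only
      rintro p (rfl | hp)
      · exact (List.nodup_cons.mp hB).1
      · exact fun h => hDep p hp (List.mem_cons_of_mem _ h)
    · dsimp only
      rintro p (rfl | hp) t ht hp2
      · rcases List.suffix_cons_iff.mp ht with rfl | ht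
        · exact List.mem_cons_of_mem _ (List.mem_cons_self)
        · exact absurd (ht.subset hp2) hbS
      · rcases List.suffix_cons_iff.mp ht with rfl | ht
        · rcases List.mem_cons.mp hp2 with h | h
          · exact absurd (h ▸ (List.mem_cons_self : b ∈ b :: B)) (hDep p hp)
          · exact List.mem_cons_of_mem _ (hHead p hp _ List.suffix_rfl h)
        · exact hHead p hp t ht hp2
  | leftArc s S b B A hroot hhead =>
    dsimp only at *
    have hsS : s ∉ S := (List.nodup_cons.mp hS).1
    refine ⟨hB, hS.of_cons, ?_, ?_, ?_⟩
    · exact fun x hx => hSB x (List.mem_cons_of_mem _ hx)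
    · dsimp only
      rintro p (rfl | hp)
      · exact hSB s (List.mem_cons_self)
      · exact hDep p hp
    · dsimp only
      rintro p (rfl | hp) t ht hp2
      · exact absurd (ht.subset hp2) hsS
      · exact hHead p hp t (ht.trans (List.suffix_cons s S)) hp2
  | reduce s S B A hh =>
    dsimp only at *
    refine ⟨hB, hS.of_cons, ?_, hDep, ?_⟩
    · exact fun x hx => hSB x (List.mem_cons_of_mem _ hx)
    · exact fun p hp t ht => hHead p hp t (ht.trans (List.suffix_cons s S))

lemma inv_reach {n : ℕ} {c : Config} (h : Relation.ReflTransGen Step (Init n) c) :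
    ArcInv c := by
  induction h with
  | refl => exact inv_init_s11 n
  | tail _ hs ih => exact inv_step_s11 ih hs

/-- For every reachable arc-eager configuration with stack top `s` and buffer
front `b`, and every applicable action, the required-arc set `RA(Λ, a)` and
the forbidden-arc set `FA(Λ, a)` of the paper are disjoint. The four
conjuncts treat Left-Arc (under its precondition that `s` is headless),
Right-Arc, Reduce (under its precondition that `s` has a head), and Shift. -/
theorem stmt11 (n : ℕ) (c : Config)
    (h : Relation.ReflTransGen Step (Init n) c)
    (s b : ℕ) (S' B' : List ℕ) (hS : c.S = s :: S') (hB : c.B = b :: B') :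
    ((∀ k, (k, s) ∉ c.A) →
      (insert (b, s) c.A) ∩
        ({p : ℕ × ℕ | p.2 = s ∧ p.1 ∈ c.B ∧ p.1 ≠ b} ∪
         {p : ℕ × ℕ | p.1 = s ∧ p.2 ∈ c.B} ∪
         Earcs c.S (insert (b, s) c.A)) = ∅) ∧
    ((insert (s, b) c.A) ∩
        ({p : ℕ × ℕ | p.2 = b ∧ (p.1 ∈ c.B ∨ p.1 ∈ c.S) ∧ p.1 ≠ s} ∪
         {p : ℕ × ℕ | p.1 = b ∧ p.2 ∈ c.S} ∪
         Earcs c.S (insert (s, b) c.A)) = ∅) ∧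
    ((∃ k, (k, s) ∈ c.A) →
      c.A ∩ ({p : ℕ × ℕ | p.2 = s ∧ p.1 ∈ c.B} ∪ Earcs c.S c.A) = ∅) ∧
    (c.A ∩ ({p : ℕ × ℕ | p.2 = b ∧ (p.1 ∈ c.B ∨ p.1 ∈ c.S)} ∪
        Earcs c.S c.A) = ∅) := by
  obtain ⟨hBnd, hSnd, hSB, hDep, hHead⟩ := inv_reach h
  have hsS : s ∈ c.S := hS ▸ (List.mem_cons_self : s ∈ s :: S')
  have hbB : b ∈ c.B := hB ▸ (List.mem_cons_self : b ∈ b :: B')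
  have hsb : s ≠ b := fun e => hSB s hsS (e ▸ hbB)
  have hHd : ∀ p ∈ c.A, p.2 ∈ c.S → p.1 ∈ c.S :=
    fun p hp h2 => hHead p hp c.S List.suffix_rfl h2
  refine ⟨?_, ?_, ?_, ?_⟩
  · intro hhead
    apply Set.eq_empty_iff_forall_notMem.mpr
    rintro p ⟨hra, hfa⟩
    rcases hfa with (⟨h1, h2, h3⟩ | ⟨h1, h2⟩) | he
    · rcases hra with rfl | hp
      · exact h3 rfl
      · exact hhead p.1 (by rw [← h1]; simpa using hp)
    · rcases hra with rfl | hp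
      · exact hSB s hsS (h1 ▸ h2)
      · exact hDep p hp h2
    · exact he.2 hra
  · apply Set.eq_empty_iff_forall_notMem.mpr
    rintro p ⟨hra, hfa⟩
    rcases hfa with (⟨h1, h2, h3⟩ | ⟨h1, h2⟩) | he
    · rcases hra with rfl | hp
      · exact h3 rfl
      · exact hDep p hp (h1 ▸ hbB)
    · rcases hra with rfl | hp
      · exact hsb h1
      · exact hSB p.1 (hHd p hp h2) (h1 ▸ hbB)
    · exact he.2 hra
  · intro _
    apply Set.eq_empty_iff_forall_notMem.mpr
    rintro p ⟨hp, hfa⟩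
    rcases hfa with ⟨h1, h2⟩ | he
    · exact hSB p.1 (hHd p hp (h1 ▸ hsS)) h2
    · exact he.2 hp
  · apply Set.eq_empty_iff_forall_notMem.mpr
    rintro p ⟨hp, hfa⟩
    rcases hfa with ⟨h1, _⟩ | he
    · exact hDep p hp (h1 ▸ hbB)
    · exact he.2 hp
end

section
/- In the arc-eager system, once a word w has been popped from the stack (by Left-Arc or Reduce), no arc incident to w can be added in any subsequent transition; hence the set of arcs incident to w in the final tree equals the set of arcs incident to w at the moment of popping. -/
/-- Once a word `w` has left both the stack and the buffer, it never
reappears; every arc added by a transition has both endpoints in the current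
stack or buffer; hence the arcs incident to `w` never change after `w` has
been popped. -/
theorem stmt13 (w : ℕ) :
    (∀ c c' : Config, Step c c' → w ∉ c.S → w ∉ c.B → w ∉ c'.S ∧ w ∉ c'.B) ∧
    (∀ c c' : Config, Step c c' → ∀ e : ℕ × ℕ, e ∈ c'.A → e ∉ c.A →
      (e.1 ∈ c.S ∨ e.1 ∈ c.B) ∧ (e.2 ∈ c.S ∨ e.2 ∈ c.B)) ∧
    (∀ c c' : Config, Relation.ReflTransGen Step c c' → w ∉ c.S → w ∉ c.B →
      {e : ℕ × ℕ | e ∈ c'.A ∧ (e.1 = w ∨ e.2 = w)} =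
        {e : ℕ × ℕ | e ∈ c.A ∧ (e.1 = w ∨ e.2 = w)}) := by
  have h1 : ∀ c c' : Config, Step c c' → w ∉ c.S → w ∉ c.B → w ∉ c'.S ∧ w ∉ c'.B := by
    intro c c' h hS hB
    cases h <;> simp_all
  have h2 : ∀ c c' : Config, Step c c' → ∀ e : ℕ × ℕ, e ∈ c'.A → e ∉ c.A →
      (e.1 ∈ c.S ∨ e.1 ∈ c.B) ∧ (e.2 ∈ c.S ∨ e.2 ∈ c.B) := by
    intro c c' h e he hne
    cases h <;> simp_all
  refine ⟨h1, h2, ?_⟩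
  intro c c' hrel
  induction hrel with
  | refl => intro _ _; rfl
  | @tail b c' hab hbc ih =>
    intro hS hB
    have hmid : w ∉ b.S ∧ w ∉ b.B := by
      clear hbc ih
      induction hab with
      | refl => exact ⟨hS, hB⟩
      | tail h1' h2' ih' => exact h1 _ _ h2' ih'.1 ih'.2
    have hstep : {e : ℕ × ℕ | e ∈ c'.A ∧ (e.1 = w ∨ e.2 = w)} =
        {e : ℕ × ℕ | e ∈ b.A ∧ (e.1 = w ∨ e.2 = w)} := by
      ext e
      simp only [Set.mem_setOf_eq, and_congr_left_iff]
      intro hw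
      constructor
      · intro he
        by_contra hne
        have := h2 _ _ hbc e he hne
        rcases hw with hw | hw <;> subst hw
        · rcases this.1 with h | h
          · exact hmid.1 h
          · exact hmid.2 h
        · rcases this.2 with h | h
          · exact hmid.1 h
          · exact hmid.2 h
      · intro he
        cases hbc <;> simp_all
    rw [hstep, ih hS hB]
end
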